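/- arXiv:2309.16453 — 2 statements merged into one kernel-verified Lean document; each statement's English description precedes it below -/
import Mathlib

section
/- Let X be a topological space, I = [0,1], and t_n = 1 − 2^{−(n−1)} for n ≥ 1. Suppose F : X × [0,1) → X is continuous, and suppose for each x₀ ∈ X and each neighborhood V of x₀ there exist k ∈ ℕ and a neighborhood W of x₀ such that F(W × [t_k, 1)) ⊆ V. Then the map H : X × [0,1] → X defined by H = F on X × [0,1) and H(x,1) = x is continuous. -/
open Filter Topology

/-- extending a map `F : X × [0,1) → X` by the identity at `t = 1`
gives a continuous map on `X × [0,1]`, provided tails of tracks shrink into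
neighborhoods. -/
theorem stmt_10 {X : Type*} [TopologicalSpace X]
    (F : X → ℝ → X)
    (hFc : ContinuousOn (fun p : X × ℝ => F p.1 p.2)
      ((Set.univ : Set X) ×ˢ Set.Ico (0 : ℝ) 1))
    (htail : ∀ x₀ : X, ∀ V ∈ 𝓝 x₀, ∃ k : ℕ, 1 ≤ k ∧ ∃ W ∈ 𝓝 x₀,
      ∀ x ∈ W, ∀ t ∈ Set.Ico (1 - (1 / 2 : ℝ) ^ (k - 1)) (1 : ℝ), F x t ∈ V)
    (H : X → ℝ → X)
    (hH1 : ∀ x : X, ∀ t ∈ Set.Ico (0 : ℝ) 1, H x t = F x t)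
    (hH2 : ∀ x : X, H x 1 = x) :
    ContinuousOn (fun p : X × ℝ => H p.1 p.2)
      ((Set.univ : Set X) ×ˢ Set.Icc (0 : ℝ) 1) := by
  rintro ⟨x, t⟩ ⟨-, ht0, ht1⟩
  rcases lt_or_eq_of_le ht1 with ht | rfl
  · -- interior case: t < 1
    have hmem : ((x, t) : X × ℝ) ∈ (Set.univ : Set X) ×ˢ Set.Ico (0 : ℝ) 1 :=
      ⟨trivial, ht0, ht⟩
    have h1 : ContinuousWithinAt (fun p : X × ℝ => F p.1 p.2)
        (((Set.univ : Set X) ×ˢ Set.Icc (0 : ℝ) 1) ∩ {p : X × ℝ | p.2 < 1}) (x, t) := by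
      apply (hFc (x, t) hmem).mono
      rintro ⟨y, s⟩ ⟨⟨-, hs0, -⟩, hs⟩
      exact ⟨trivial, hs0, hs⟩
    have h2 : ContinuousWithinAt (fun p : X × ℝ => H p.1 p.2)
        (((Set.univ : Set X) ×ˢ Set.Icc (0 : ℝ) 1) ∩ {p : X × ℝ | p.2 < 1}) (x, t) := by
      refine h1.congr ?_ ?_
      · rintro ⟨y, s⟩ ⟨⟨-, hs0, -⟩, hs⟩
        exact hH1 y s ⟨hs0, hs⟩
      · exact hH1 x t ⟨ht0, ht⟩
    have hopen : {p : X × ℝ | p.2 < 1} ∈ 𝓝 ((x, t) : X × ℝ) :=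
      (isOpen_lt continuous_snd continuous_const).mem_nhds ht
    exact (continuousWithinAt_inter hopen).mp h2
  · -- boundary case: t = 1
    have hx : H x 1 = x := hH2 x
    rw [ContinuousWithinAt]
    rw [show H ((x,(1:ℝ))).1 ((x,(1:ℝ))).2 = x from hx]
    intro V hV
    obtain ⟨k, -, W, hW, hFW⟩ := htail x V hV
    have hε : (0 : ℝ) < (1 / 2 : ℝ) ^ (k - 1) := by positivity
    have hU : (W ∩ V) ×ˢ Set.Ioi (1 - (1 / 2 : ℝ) ^ (k - 1)) ∈ 𝓝 ((x, 1) : X × ℝ) := by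
      apply prod_mem_nhds
      · exact Filter.inter_mem hW hV
      · exact Ioi_mem_nhds (by linarith)
    refine Filter.mem_map.mpr (Filter.mem_of_superset
      (Filter.inter_mem (nhdsWithin_le_nhds hU) self_mem_nhdsWithin) ?_)
    rintro ⟨y, s⟩ ⟨⟨⟨hyW, hyV⟩, hs⟩, -, hs0, hs1⟩
    simp only [Set.mem_preimage]
    rcases lt_or_eq_of_le hs1 with hlt | rfl
    · show H y s ∈ V
      rw [hH1 y s ⟨hs0, hlt⟩]
      exact hFW y hyW s ⟨le_of_lt hs, hlt⟩
    · show H y 1 ∈ V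
      rw [hH2 y]; exact hyV
end

section
/- Let G be a group acting by homeomorphisms on spaces X and Y with X an equivariant absolute extensor (G-AE) for a class containing X × [0,1], and let A be a closed G-invariant subset of X. If A is a G-AE, then A is a strong G-deformation retract of X: there exists a continuous G-homotopy F : X × [0,1] → X with F(x,0) = x for all x ∈ X, F(a,t) = a for all a ∈ A and t ∈ [0,1], and F(X × {1}) ⊆ A. -/
open unitInterval

universe u v

/-- A subset `s` of the `G`-space `Z` is an equivariant absolute extensor
(for the class of all `G`-spaces in the same universe): every `G`-map into `s`
defined on a closed invariant subset of a `G`-space extends to a global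
`G`-map into `s`. -/
def IsGAE (G : Type v) [Group G] (Z : Type u) [TopologicalSpace Z] [MulAction G Z]
    (s : Set Z) : Prop :=
  ∀ (Y : Type u) [TopologicalSpace Y] [MulAction G Y],
    (∀ g : G, Continuous (fun y : Y => g • y)) →
    ∀ B : Set Y, IsClosed B → (∀ g : G, ∀ b ∈ B, g • b ∈ B) →
    ∀ f : Y → Z, ContinuousOn f B → (∀ b ∈ B, f b ∈ s) →
    (∀ g : G, ∀ b ∈ B, f (g • b) = g • f b) →
    ∃ F : Y → Z, Continuous F ∧ (∀ y, F y ∈ s) ∧ (∀ b ∈ B, F b = f b) ∧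
      (∀ g : G, ∀ y : Y, F (g • y) = g • F y)

/-- Pasting lemma for two closed sets. -/
lemma continuousOn_union_of_isClosed {α β : Type*} [TopologicalSpace α] [TopologicalSpace β]
    {f : α → β} {s t : Set α} (hs : IsClosed s) (ht : IsClosed t)
    (hfs : ContinuousOn f s) (hft : ContinuousOn f t) : ContinuousOn f (s ∪ t) := by
  intro p hp
  have h1 : ContinuousWithinAt f s p := by
    by_cases h : p ∈ s
    · exact hfs p h
    · exact continuousWithinAt_of_notMem_closure (by rwa [hs.closure_eq])
  have h2 : ContinuousWithinAt f t p := by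
    by_cases h : p ∈ t
    · exact hft p h
    · exact continuousWithinAt_of_notMem_closure (by rwa [ht.closure_eq])
  exact h1.union h2

/-- a closed invariant subset which is a `G`-AE is a strong
`G`-deformation retract of a `G`-AE space. -/
theorem stmt_13 {G : Type v} {X : Type u} [Group G] [MulAction G X] [TopologicalSpace X]
    (hGX : ∀ g : G, Continuous (fun x : X => g • x))
    (hX : IsGAE G X (Set.univ : Set X))
    (A : Set X) (hAcl : IsClosed A) (hAinv : ∀ g : G, ∀ a ∈ A, g • a ∈ A)
    (hA : IsGAE G X A) :
    ∃ F : X → unitInterval → X,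
      Continuous (fun p : X × unitInterval => F p.1 p.2) ∧
      (∀ x : X, F x 0 = x) ∧
      (∀ a ∈ A, ∀ t : unitInterval, F a t = a) ∧
      (∀ x : X, F x 1 ∈ A) ∧
      (∀ g : G, ∀ x : X, ∀ t : unitInterval, F (g • x) t = g • F x t) := by
  classical
  -- Step 1: a G-retraction r : X → A
  obtain ⟨r, hr_cont, hr_mem, hr_fix, hr_equiv⟩ :=
    hA X hGX A hAcl hAinv id continuousOn_id (fun b hb => hb) (fun g b _ => rfl)
  -- Step 2: extend over X × I
  letI : MulAction G (X × unitInterval) :=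
    { smul := fun g p => (g • p.1, p.2)
      one_smul := fun p => by show ((1 : G) • p.1, p.2) = p; simp
      mul_smul := fun g h p => by show ((g * h) • p.1, p.2) = (g • h • p.1, p.2); simp [mul_smul] }
  have hsmul : ∀ (g : G) (p : X × unitInterval), g • p = (g • p.1, p.2) := fun _ _ => rfl
  have hGY : ∀ g : G, Continuous (fun p : X × unitInterval => g • p) := fun g => by
    simpa [hsmul] using ((hGX g).comp continuous_fst).prodMk continuous_snd
  set B1 : Set (X × unitInterval) :=
    (Set.univ ×ˢ {(0 : unitInterval)}) ∪ (A ×ˢ Set.univ) with hB1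
  set B : Set (X × unitInterval) := B1 ∪ (Set.univ ×ˢ {(1 : unitInterval)}) with hB
  have hB1cl : IsClosed B1 :=
    (isClosed_univ.prod isClosed_singleton).union (hAcl.prod isClosed_univ)
  have hBcl : IsClosed B := hB1cl.union (isClosed_univ.prod isClosed_singleton)
  set f : X × unitInterval → X := fun p => if p.2 = 1 then r p.1 else p.1 with hf
  have hfB1 : ∀ p ∈ B1, f p = p.1 := by
    rintro ⟨x, t⟩ hp
    by_cases h : t = 1
    · rcases hp with hp | hp
      · simp only [Set.mem_prod, Set.mem_singleton_iff] at hp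
        rw [hp.2] at h
        exact absurd h (by norm_num [unitInterval])
      · simp only [Set.mem_prod] at hp
        simp [f, h, hr_fix x hp.1]
    · simp [f, h]
  have hfB1' : ∀ p ∈ B, f p ∈ A ∨ f p = p.1 := by
    rintro p (hp | hp)
    · exact Or.inr (hfB1 p hp)
    · simp only [Set.mem_prod, Set.mem_singleton_iff] at hp
      exact Or.inl (by simp [f, hp.2]; exact hr_mem p.1)
  have hfcont : ContinuousOn f B := by
    apply continuousOn_union_of_isClosed hB1cl (isClosed_univ.prod isClosed_singleton)
    · exact ContinuousOn.congr continuous_fst.continuousOn hfB1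
    · apply ContinuousOn.congr (hr_cont.comp continuous_fst).continuousOn
      rintro ⟨x, t⟩ hp
      simp only [Set.mem_prod, Set.mem_singleton_iff] at hp
      simp [f, hp.2]
  have hBinv : ∀ g : G, ∀ b ∈ B, g • b ∈ B := by
    rintro g ⟨x, t⟩ hb
    rw [hsmul]
    rcases hb with (hb | hb) | hb
    · simp only [Set.mem_prod, Set.mem_singleton_iff] at hb
      exact Or.inl (Or.inl (by simp [hb.2]))
    · simp only [Set.mem_prod] at hb
      exact Or.inl (Or.inr (by simp [hAinv g x hb.1]))
    · simp only [Set.mem_prod, Set.mem_singleton_iff] at hb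
      exact Or.inr (by simp [hb.2])
  have hfequiv : ∀ g : G, ∀ b ∈ B, f (g • b) = g • f b := by
    rintro g ⟨x, t⟩ _
    rw [hsmul]
    by_cases h : t = 1
    · simp [f, h, hr_equiv g x]
    · simp [f, h]
  obtain ⟨F', hF'cont, -, hF'eq, hF'equiv⟩ :=
    hX (X × unitInterval) hGY B hBcl hBinv f hfcont (fun _ _ => Set.mem_univ _) hfequiv
  refine ⟨fun x t => F' (x, t), hF'cont, ?_, ?_, ?_, ?_⟩
  · intro x
    have h0 : (x, (0 : unitInterval)) ∈ B := Or.inl (Or.inl (by simp))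
    show F' (x, 0) = x
    rw [hF'eq _ h0, hfB1 _ (Or.inl (by simp))]
  · intro a ha t
    have hm : (a, t) ∈ B := Or.inl (Or.inr (by simp [ha]))
    show F' (a, t) = a
    rw [hF'eq _ hm, hfB1 _ (Or.inr (by simp [ha]))]
  · intro x
    have hm : (x, (1 : unitInterval)) ∈ B := Or.inr (by simp)
    show F' (x, 1) ∈ A
    rw [hF'eq _ hm]
    simpa [f] using hr_mem x
  · intro g x t
    have := hF'equiv g (x, t)
    rwa [hsmul] at this
end
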